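/- For each N ∈ ℕ, let L be an immigration-death process absorbing at 0, with immigration rate α(N) > 0 and death rate μ(N) > 0: its transition rates for x ≥ 1 are x → x+1 at rate α and x → x−1 at rate μx, and 0 is absorbing. Let L_0 = l(N) → ∞ as N → ∞. If lim_{N→∞} l(N)μ(N)/α(N) > e, then the probability that L ever reaches the level 2l(N) tends to 0 as N → ∞. -/

import Mathlib

open Filter Set

/-- A continuous-time Markov chain on a countable state space `S`
with jump-rate function `q` (`q x y` is the rate of jumps `x → y` for `x ≠ y`),
bundled together with its underlying probability space.
The law of the process is pinned down by right-continuity of the paths,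
the Markov property, time-homogeneity, and the infinitesimal jump rates. -/
structure CTMC {S : Type*} [MeasurableSpace S] (q : S → S → ℝ) where
  /-- the sample space -/
  Omega : Type
  [mOmega : MeasurableSpace Omega]
  /-- the underlying probability measure -/
  μ : MeasureTheory.Measure Omega
  [isProb : MeasureTheory.IsProbabilityMeasure μ]
  /-- the process: `X t ω` is the state at time `t` -/
  X : ℝ → Omega → S
  meas : ∀ t : ℝ, Measurable (X t)
  /-- paths are right-continuous (w.r.t. the discrete topology on `S`) -/
  rightCont : ∀ ω t, ∃ ε > 0, ∀ s, t ≤ s → s < t + ε → X s ω = X t ω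
  /-- the Markov property: conditionally on the present state, the future is
  independent of the past (stated multiplicatively to avoid conditioning on
  null events) -/
  markov : ∀ (n : ℕ) (ts : Fin n → ℝ) (xs : Fin n → S) (t s : ℝ) (x y : S),
    (∀ i, 0 ≤ ts i ∧ ts i ≤ t) → t ≤ s →
    μ ({ω | X s ω = y} ∩ {ω | X t ω = x} ∩ ⋂ i, {ω | X (ts i) ω = xs i})
      * μ {ω | X t ω = x}
    = μ ({ω | X s ω = y} ∩ {ω | X t ω = x})
      * μ ({ω | X t ω = x} ∩ ⋂ i, {ω | X (ts i) ω = xs i})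
  /-- time-homogeneity of the transition probabilities -/
  homog : ∀ (t u s : ℝ) (x y : S), 0 ≤ t → 0 ≤ u → 0 ≤ s →
    μ ({ω | X (t + s) ω = y} ∩ {ω | X t ω = x}) * μ {ω | X u ω = x}
    = μ ({ω | X (u + s) ω = y} ∩ {ω | X u ω = x}) * μ {ω | X t ω = x}
  /-- infinitesimal jump rates: for `x ≠ y`,
  `P(X_{t+h} = y, X_t = x) = q x y · h · P(X_t = x) + o(h)` -/
  rate : ∀ (t : ℝ) (x y : S), 0 ≤ t → x ≠ y →
    Tendsto
      (fun h : ℝ => (μ ({ω | X (t + h) ω = y} ∩ {ω | X t ω = x})).toReal / h)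
      (nhdsWithin 0 (Set.Ioi 0))
      (nhds (q x y * (μ {ω | X t ω = x}).toReal))
  /-- infinitesimal holding rate:
  `P(X_{t+h} = x, X_t = x) = (1 - (∑_y q x y) · h) · P(X_t = x) + o(h)` -/
  rate_stay : ∀ (t : ℝ) (x : S), 0 ≤ t →
    Tendsto
      (fun h : ℝ =>
        ((μ ({ω | X (t + h) ω = x} ∩ {ω | X t ω = x})).toReal
          - (μ {ω | X t ω = x}).toReal) / h)
      (nhdsWithin 0 (Set.Ioi 0))
      (nhds (-(∑' y, q x y) * (μ {ω | X t ω = x}).toReal))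

attribute [instance] CTMC.mOmega CTMC.isProb

open MeasureTheory

/-- Jump rates of an immigration-death process absorbing at `0`, with immigration
rate `alpha` and death rate `mu`: for `x ≥ 1`, `x → x+1` at rate `alpha` and
`x → x-1` at rate `mu * x`; the state `0` is absorbing. -/
noncomputable def idAbsRates (alpha mu : ℝ) : ℕ → ℕ → ℝ :=
  fun x y =>
    if x = 0 then 0
    else if y = x + 1 then alpha
    else if y + 1 = x then mu * x
    else 0

namespace IDH


noncomputable def wF (rho : ℝ) (k : ℕ) : ℝ := ∏ j ∈ Finset.Ico 1 k, (rho * j)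

noncomputable def phiF (rho : ℝ) (x : ℕ) : ℝ := ∑ k ∈ Finset.Icc 1 x, wF rho k

variable {rho : ℝ}

lemma wF_pos (hrho : 0 < rho) (k : ℕ) : 0 < wF rho k := by
  refine Finset.prod_pos fun j hj => ?_
  have h1 : 1 ≤ j := (Finset.mem_Ico.mp hj).1
  have : (0:ℝ) < j := by exact_mod_cast h1
  positivity

lemma wF_succ (k : ℕ) (hk : 1 ≤ k) : wF rho (k + 1) = wF rho k * (rho * k) :=
  Finset.prod_Ico_succ_top hk _

lemma phiF_succ (x : ℕ) : phiF rho (x + 1) = phiF rho x + wF rho (x + 1) :=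
  Finset.sum_Icc_succ_top (Nat.succ_le_succ (Nat.zero_le x)) _

lemma phiF_nonneg (hrho : 0 < rho) (x : ℕ) : 0 ≤ phiF rho x :=
  Finset.sum_nonneg fun k _ => (wF_pos hrho k).le

lemma phiF_mono (hrho : 0 < rho) {x y : ℕ} (h : x ≤ y) : phiF rho x ≤ phiF rho y := by
  refine Finset.sum_le_sum_of_subset_of_nonneg ?_ fun k _ _ => (wF_pos hrho k).le
  exact Finset.Icc_subset_Icc le_rfl h

lemma phiF_pos (hrho : 0 < rho) {x : ℕ} (hx : 1 ≤ x) : 0 < phiF rho x := by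
  have h1 : phiF rho 1 ≤ phiF rho x := phiF_mono hrho hx
  have : phiF rho 1 = wF rho 1 := by simp [phiF]
  have hw := wF_pos hrho 1
  linarith

lemma phiF_harmonic {alpha mu : ℝ} (ha : 0 < alpha) (hrho' : rho = mu / alpha) (m : ℕ) :
    alpha * phiF rho (m + 2) + mu * (m + 1) * phiF rho m
      = (alpha + mu * (m + 1)) * phiF rho (m + 1) := by
  have h1 : phiF rho (m + 2) = phiF rho (m + 1) + wF rho (m + 2) := phiF_succ _
  have h2 : phiF rho (m + 1) = phiF rho m + wF rho (m + 1) := phiF_succ _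
  have h3 : wF rho (m + 2) = wF rho (m + 1) * (rho * (m + 1)) := by
    have := wF_succ (rho := rho) (m + 1) (Nat.succ_le_succ (Nat.zero_le m))
    simpa using this
  have key : alpha * wF rho (m + 2) = mu * (m + 1) * wF rho (m + 1) := by
    rw [h3, hrho']
    field_simp
  rw [h1, h2]
  push_cast at key ⊢
  nlinarith [key]

/-- capped function -/
noncomputable def PhiF (rho : ℝ) (L x : ℕ) : ℝ := min (phiF rho x) (phiF rho L)

lemma PhiF_nonneg (hrho : 0 < rho) (L x : ℕ) : 0 ≤ PhiF rho L x :=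
  le_min (phiF_nonneg hrho x) (phiF_nonneg hrho L)

lemma PhiF_le_cap (hrho : 0 < rho) (L x : ℕ) : PhiF rho L x ≤ phiF rho L := min_le_right _ _

lemma PhiF_eq_cap (hrho : 0 < rho) {L x : ℕ} (h : L ≤ x) : PhiF rho L x = phiF rho L :=
  min_eq_right (phiF_mono hrho h)

lemma PhiF_eq_of_le (hrho : 0 < rho) {L x : ℕ} (h : x ≤ L) : PhiF rho L x = phiF rho x :=
  min_eq_left (phiF_mono hrho h)

lemma PhiF_superharmonic (hrho : 0 < rho) {alpha mu : ℝ} (ha : 0 < alpha) (hm : 0 < mu)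
    (hrho' : rho = mu / alpha) (L m : ℕ) :
    alpha * PhiF rho L (m + 2) + mu * (m + 1) * PhiF rho L m
      ≤ (alpha + mu * (m + 1)) * PhiF rho L (m + 1) := by
  have hm1 : (0:ℝ) ≤ mu * (m+1) := by positivity
  rcases le_total (phiF rho (m+1)) (phiF rho L) with h | h
  · -- PhiF L (m+1) = phiF (m+1), use harmonic identity
    have e1 : PhiF rho L (m+1) = phiF rho (m+1) := min_eq_left h
    have b1 : PhiF rho L (m+2) ≤ phiF rho (m+2) := min_le_left _ _
    have b2 : PhiF rho L m ≤ phiF rho m := min_le_left _ _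
    have := phiF_harmonic (rho := rho) ha hrho' m
    nlinarith
  · have e1 : PhiF rho L (m+1) = phiF rho L := min_eq_right h
    have b1 : PhiF rho L (m+2) ≤ phiF rho L := min_le_right _ _
    have b2 : PhiF rho L m ≤ phiF rho L := min_le_right _ _
    nlinarith




lemma wF_eq (k : ℕ) : wF rho (k + 1) = rho ^ k * (Nat.factorial k : ℝ) := by
  have h1 : wF rho (k+1) = (∏ j ∈ Finset.Ico 1 (k+1), rho) * ∏ j ∈ Finset.Ico 1 (k+1), (j:ℝ) := by
    rw [← Finset.prod_mul_distrib]; rfl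
  have h2 : (∏ j ∈ Finset.Ico 1 (k+1), rho) = rho ^ k := by
    simp [Finset.prod_const, Nat.card_Ico]
  have h3 : (∏ j ∈ Finset.Ico 1 (k+1), (j:ℝ)) = (Nat.factorial k : ℝ) := by
    rw [← Finset.prod_Ico_id_eq_factorial]
    exact (Nat.cast_prod _ _).symm
  rw [h1, h2, h3]

lemma factorial_ge (m : ℕ) : ((m:ℝ) / Real.exp 1) ^ m ≤ (Nat.factorial m : ℝ) := by
  have hm : (0:ℝ) ≤ m := Nat.cast_nonneg m
  have hsum := Real.sum_le_exp_of_nonneg hm (m + 1)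
  have hterm : (m:ℝ) ^ m / (Nat.factorial m : ℝ) ≤ ∑ i ∈ Finset.range (m+1), (m:ℝ) ^ i / (Nat.factorial i : ℝ) := by
    refine Finset.single_le_sum (f := fun i => (m:ℝ)^i / (Nat.factorial i : ℝ)) ?_ ?_
    · intro i _; positivity
    · exact Finset.self_mem_range_succ m
  have hexp : (m:ℝ) ^ m / (Nat.factorial m : ℝ) ≤ Real.exp m := le_trans hterm hsum
  have hfac : (0:ℝ) < (Nat.factorial m : ℝ) := by exact_mod_cast Nat.factorial_pos m
  have hepos : (0:ℝ) < Real.exp 1 := Real.exp_pos 1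
  have hem : Real.exp (m:ℝ) = (Real.exp 1) ^ m := by
    rw [← Real.exp_nat_mul]; norm_num
  rw [div_pow]
  rw [div_le_iff₀ (by positivity)]
  rw [div_le_iff₀ hfac] at hexp
  rw [hem] at hexp
  linarith [hexp]

lemma ratio_bound (c : ℝ) (hc : Real.exp 1 < c) (l : ℕ) (hl : 1 ≤ l)
    (hrho : 0 < rho) (hcl : c ≤ (l:ℝ) * rho) :
    phiF rho l / phiF rho (2 * l)
      ≤ (l:ℝ) * (max (Real.exp 1 / c) (1 / c)) ^ l := by
  set e1 := Real.exp 1 with he1def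
  have he1 : (1:ℝ) < e1 := by
    have := Real.exp_one_gt_d9; rw [he1def]; linarith
  have hc1 : (1:ℝ) < c := lt_trans he1 hc
  have hc0 : (0:ℝ) < c := by linarith
  set θ := max (e1 / c) (1 / c) with hθdef
  have hθ0 : 0 < θ := lt_max_of_lt_right (by positivity)
  have hφ2l : 0 < phiF rho (2*l) := phiF_pos hrho (by omega)
  have hwl : 0 < wF rho l := wF_pos hrho l
  have hl0 : (0:ℝ) < l := by exact_mod_cast hl
  have hw2l_le : wF rho (2*l) ≤ phiF rho (2*l) := by
    refine Finset.single_le_sum (f := fun k => wF rho k) (fun k _ => (wF_pos hrho k).le) ?_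
    simp [Finset.mem_Icc]; omega
  rw [div_le_iff₀ hφ2l]
  have hkey : ∀ k ∈ Finset.Icc 1 l, wF rho k ≤ max 1 (wF rho l) := by
    intro k hk
    obtain ⟨hk1, hkl⟩ := Finset.mem_Icc.mp hk
    rcases le_or_gt (wF rho k) 1 with h | h
    · exact le_trans h (le_max_left _ _)
    · refine le_trans ?_ (le_max_right _ _)
      have hsplit : wF rho k * ∏ j ∈ Finset.Ico k l, (rho * (j:ℝ)) = wF rho l :=
        Finset.prod_Ico_consecutive _ hk1 hkl
      have hgt : (1:ℝ) < rho * ((k-1:ℕ):ℝ) := by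
        by_contra hle
        push_neg at hle
        have h0 : (0:ℝ) ≤ rho * ((k-1:ℕ):ℝ) := by positivity
        have hbig : wF rho k ≤ (rho * ((k-1:ℕ):ℝ)) ^ (Finset.Ico 1 k).card := by
          rw [wF, ← Finset.prod_const]
          refine Finset.prod_le_prod (fun i hi => ?_) (fun i hi => ?_)
          · have h1 : 1 ≤ i := (Finset.mem_Ico.mp hi).1
            have : (0:ℝ) < i := by exact_mod_cast h1
            positivity
          · have h2 : i ≤ k - 1 := by have := (Finset.mem_Ico.mp hi).2; omega
            have : (i:ℝ) ≤ ((k-1:ℕ):ℝ) := by exact_mod_cast h2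
            nlinarith [hrho]
        have : (rho * ((k-1:ℕ):ℝ)) ^ (Finset.Ico 1 k).card ≤ 1 := pow_le_one₀ h0 hle
        linarith
      have hfac1 : ∀ j ∈ Finset.Ico k l, (1:ℝ) ≤ rho * j := by
        intro j hj
        obtain ⟨hjk, hjl⟩ := Finset.mem_Ico.mp hj
        have hle : ((k-1:ℕ):ℝ) ≤ (j:ℝ) := by
          have : k - 1 ≤ j := by omega
          exact_mod_cast this
        nlinarith [hrho]
      have hprod1 : (1:ℝ) ≤ ∏ j ∈ Finset.Ico k l, (rho * (j:ℝ)) := by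
        have := Finset.prod_le_prod (s := Finset.Ico k l)
          (f := fun _ : ℕ => (1:ℝ)) (g := fun j : ℕ => rho * (j:ℝ))
          (fun i _ => zero_le_one) hfac1
        simpa using this
      nlinarith [hsplit, hprod1, wF_pos hrho k]
  rcases le_or_gt (wF rho l) 1 with hA | hB
  · -- case A
    have hφl : phiF rho l ≤ (l:ℝ) := by
      have h := Finset.sum_le_sum (fun k hk => (hkey k hk).trans_eq (max_eq_left hA))
      simpa [phiF, Nat.card_Icc] using h
    have hm : 2*l = (2*l - 1) + 1 := by omega
    set m := 2*l - 1 with hmdef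
    have hml : l ≤ m := by omega
    have hw2l : (c / e1) ^ m ≤ wF rho (2*l) := by
      rw [hm, wF_eq]
      calc (c/e1)^m ≤ (rho * (m:ℝ) / e1)^m := by
            refine pow_le_pow_left₀ (by positivity) ?_ m
            have hcm : c ≤ rho * (m:ℝ) := by
              have : (l:ℝ) ≤ (m:ℝ) := by exact_mod_cast hml
              nlinarith [hrho]
            have he10 : (0:ℝ) < e1 := by linarith
            gcongr
        _ = rho ^ m * ((m:ℝ)/e1)^m := by
            rw [← mul_pow]; ring_nf
        _ ≤ rho ^ m * (Nat.factorial m : ℝ) := by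
            gcongr
            exact factorial_ge m
    have hone : (1:ℝ) ≤ θ ^ l * phiF rho (2*l) := by
      have h1 : (e1/c)^l * (c/e1)^m ≤ θ ^ l * phiF rho (2*l) := by
        have hb1 : (e1/c)^l ≤ θ^l :=
          pow_le_pow_left₀ (by positivity) (le_max_left _ _) l
        have hb2 : (c/e1)^m ≤ phiF rho (2*l) := le_trans hw2l hw2l_le
        have := mul_le_mul hb1 hb2 (by positivity) (by positivity)
        linarith
      have h2 : (1:ℝ) ≤ (e1/c)^l * (c/e1)^m := by
        have hmm : m = l + (l - 1) := by omega
        rw [hmm, pow_add, ← mul_assoc, ← mul_pow]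
        have he10 : (0:ℝ) < e1 := by linarith
        have : e1/c * (c/e1) = 1 := by field_simp
        rw [this, one_pow, one_mul]
        refine one_le_pow₀ ?_
        rw [le_div_iff₀ he10]; linarith
      linarith
    calc phiF rho l ≤ (l:ℝ) := hφl
      _ = (l:ℝ) * 1 := (mul_one _).symm
      _ ≤ (l:ℝ) * (θ^l * phiF rho (2*l)) := by
          exact mul_le_mul_of_nonneg_left hone hl0.le
      _ = (l:ℝ) * θ^l * phiF rho (2*l) := by ring
  · -- case B
    have hmax : max 1 (wF rho l) = wF rho l := max_eq_right hB.le
    have hφl : phiF rho l ≤ (l:ℝ) * wF rho l := by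
      have h := Finset.sum_le_sum (fun k hk => (hkey k hk).trans_eq hmax)
      have h2 : ∑ k ∈ Finset.Icc 1 l, wF rho l = (l:ℝ) * wF rho l := by
        simp [Finset.sum_const, Nat.card_Icc]
      rw [phiF]
      calc ∑ k ∈ Finset.Icc 1 l, wF rho k ≤ ∑ k ∈ Finset.Icc 1 l, wF rho l := h
        _ = (l:ℝ) * wF rho l := h2
    have hw2l : wF rho l * c ^ l ≤ wF rho (2*l) := by
      have hsplit : wF rho l * ∏ j ∈ Finset.Ico l (2*l), (rho * (j:ℝ)) = wF rho (2*l) :=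
        Finset.prod_Ico_consecutive _ (by omega) (by omega)
      have hprod : c ^ l ≤ ∏ j ∈ Finset.Ico l (2*l), (rho * (j:ℝ)) := by
        have hcard : (Finset.Ico l (2*l)).card = l := by simp [Nat.card_Ico]; omega
        calc c ^ l = ∏ _j ∈ Finset.Ico l (2*l), c := by rw [Finset.prod_const, hcard]
          _ ≤ ∏ j ∈ Finset.Ico l (2*l), (rho * (j:ℝ)) := by
              refine Finset.prod_le_prod (fun i _ => hc0.le) (fun i hi => ?_)
              have : l ≤ i := (Finset.mem_Ico.mp hi).1
              have hli : (l:ℝ) ≤ (i:ℝ) := by exact_mod_cast this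
              nlinarith [hrho]
      nlinarith [hwl, hprod, hsplit]
    have hone : wF rho l ≤ θ ^ l * phiF rho (2*l) := by
      have hb1 : (1/c)^l ≤ θ^l :=
        pow_le_pow_left₀ (by positivity) (le_max_right _ _) l
      have hb2 : wF rho l * c ^ l ≤ phiF rho (2*l) := le_trans hw2l hw2l_le
      have h3 : (1/c)^l * (wF rho l * c^l) = wF rho l := by
        rw [div_pow, one_pow]
        field_simp
      calc wF rho l = (1/c)^l * (wF rho l * c^l) := h3.symm
        _ ≤ θ^l * phiF rho (2*l) := by
            refine mul_le_mul hb1 hb2 (by positivity) (by positivity)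
    calc phiF rho l ≤ (l:ℝ) * wF rho l := hφl
      _ ≤ (l:ℝ) * (θ^l * phiF rho (2*l)) := by
          exact mul_le_mul_of_nonneg_left hone hl0.le
      _ = (l:ℝ) * θ^l * phiF rho (2*l) := by ring




open scoped Classical

variable {alpha mu : ℝ} (M : CTMC (idAbsRates alpha mu))

/-- the event that the chain is at `x` at time `t` -/
def ev (t : ℝ) (x : ℕ) : Set M.Omega := {ω | M.X t ω = x}

lemma ev_meas (t : ℝ) (x : ℕ) : MeasurableSet (ev M t x) :=
  M.meas t (measurableSet_singleton x)

lemma ev_disj (t : ℝ) : Pairwise (Function.onFun Disjoint fun z : ℕ => ev M t z) := by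
  intro a b hab
  simp only [Function.onFun, Set.disjoint_left]
  intro ω h1 h2
  exact hab (h1.symm.trans h2)

lemma part_enn (A : Set M.Omega) (hA : MeasurableSet A) (v : ℝ) :
    M.μ A = ∑' z : ℕ, M.μ (A ∩ ev M v z) := by
  have hU : A = ⋃ z : ℕ, A ∩ ev M v z := by
    ext ω
    constructor
    · intro h
      exact Set.mem_iUnion.mpr ⟨M.X v ω, h, rfl⟩
    · intro h
      obtain ⟨z, hz, -⟩ := Set.mem_iUnion.mp h
      exact hz
  have hμ : M.μ A = M.μ (⋃ z : ℕ, A ∩ ev M v z) := by rw [← hU]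
  rw [hμ, measure_iUnion (fun a b hab =>
    Set.disjoint_left.mpr fun ω h1 h2 => hab (h1.2.symm.trans h2.2))
    (fun z => hA.inter (ev_meas M v z))]

lemma part_ne_top (A : Set M.Omega) (hA : MeasurableSet A) (v : ℝ) :
    (∑' z : ℕ, M.μ (A ∩ ev M v z)) ≠ ⊤ := by
  rw [← part_enn M A hA v]
  exact measure_ne_top _ _

lemma part_toReal (A : Set M.Omega) (hA : MeasurableSet A) (v : ℝ) :
    (M.μ A).toReal = ∑' z : ℕ, (M.μ (A ∩ ev M v z)).toReal := by
  rw [part_enn M A hA v, ENNReal.tsum_toReal_eq (fun z => measure_ne_top _ _)]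

lemma part_summable (A : Set M.Omega) (hA : MeasurableSet A) (v : ℝ) :
    Summable fun z : ℕ => (M.μ (A ∩ ev M v z)).toReal :=
  ENNReal.summable_toReal (part_ne_top M A hA v)

/-- the transition kernel over a gap `h`, read off at a reference time where the
state `z` is charged (or `0` if there is no such time) -/
noncomputable def kern (h : ℝ) (z y : ℕ) : ℝ :=
  if hv : ∃ v : ℝ, 0 ≤ v ∧ M.μ (ev M v z) ≠ 0 then
    (M.μ (ev M (hv.choose + h) y ∩ ev M hv.choose z)).toReal
      / (M.μ (ev M hv.choose z)).toReal
  else 0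

lemma kern_nonneg (h : ℝ) (z y : ℕ) : 0 ≤ kern M h z y := by
  rw [kern]
  split_ifs
  · positivity
  · exact le_rfl

lemma kern_spec {v h : ℝ} (hv : 0 ≤ v) (hh : 0 ≤ h) (z y : ℕ) :
    (M.μ (ev M (v + h) y ∩ ev M v z)).toReal
      = kern M h z y * (M.μ (ev M v z)).toReal := by
  rw [kern]
  split_ifs with hex
  · obtain ⟨hv0, hne0⟩ := hex.choose_spec
    set v0 := hex.choose
    have hp0 : 0 < (M.μ (ev M v0 z)).toReal :=
      ENNReal.toReal_pos hne0 (measure_ne_top _ _)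
    have hhom := M.homog v v0 h z y hv hv0 hh
    have hre : (M.μ (ev M (v+h) y ∩ ev M v z)).toReal * (M.μ (ev M v0 z)).toReal
        = (M.μ (ev M (v0+h) y ∩ ev M v0 z)).toReal * (M.μ (ev M v z)).toReal := by
      rw [← ENNReal.toReal_mul, ← ENNReal.toReal_mul]
      exact congrArg ENNReal.toReal hhom
    field_simp
    linarith [hre]
  · push_neg at hex
    have h0 : M.μ (ev M v z) = 0 := hex v hv
    have : M.μ (ev M (v+h) y ∩ ev M v z) = 0 :=
      le_antisymm (le_trans (measure_mono Set.inter_subset_right) h0.le) zero_le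
    simp [this, h0]

lemma kern_summable (h : ℝ) (z : ℕ) : Summable fun y => kern M h z y := by
  rw [show (fun y => kern M h z y) = fun y => kern M h z y from rfl]
  by_cases hex : ∃ v : ℝ, 0 ≤ v ∧ M.μ (ev M v z) ≠ 0
  · have : (fun y => kern M h z y) = fun y =>
        (M.μ (ev M (hex.choose + h) y ∩ ev M hex.choose z)).toReal
          / (M.μ (ev M hex.choose z)).toReal := by
      funext y; rw [kern, dif_pos hex]
    rw [this]
    apply Summable.div_const
    have := part_summable M (ev M hex.choose z) (ev_meas M _ _) (hex.choose + h)
    apply this.congr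
    intro y
    rw [Set.inter_comm]
  · have : (fun y => kern M h z y) = fun _ => (0:ℝ) := by
      funext y; rw [kern, dif_neg hex]
    rw [this]
    exact summable_zero

lemma kern_tsum_le_one (h : ℝ) (hh : 0 ≤ h) (z : ℕ) : ∑' y, kern M h z y ≤ 1 := by
  by_cases hex : ∃ v : ℝ, 0 ≤ v ∧ M.μ (ev M v z) ≠ 0
  · obtain ⟨hv0, hne0⟩ := hex.choose_spec
    set v0 := hex.choose
    have hp0 : 0 < (M.μ (ev M v0 z)).toReal :=
      ENNReal.toReal_pos hne0 (measure_ne_top _ _)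
    have heq : ∀ y, kern M h z y
        = (M.μ (ev M v0 z ∩ ev M (v0 + h) y)).toReal / (M.μ (ev M v0 z)).toReal := by
      intro y; rw [kern, dif_pos hex, Set.inter_comm]
    have h1 : ∑' y, kern M h z y
        = (∑' y, (M.μ (ev M v0 z ∩ ev M (v0+h) y)).toReal) / (M.μ (ev M v0 z)).toReal := by
      rw [tsum_congr heq, tsum_div_const]
    have h2 : (∑' y, (M.μ (ev M v0 z ∩ ev M (v0+h) y)).toReal)
        = (M.μ (ev M v0 z)).toReal := (part_toReal M _ (ev_meas M _ _) _).symm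
    rw [h1, h2, div_self hp0.ne']
  · have : (fun y => kern M h z y) = fun _ => (0:ℝ) := by
      funext y; rw [kern, dif_neg hex]
    rw [this, tsum_zero]; norm_num


end IDH

namespace IDH

variable {alpha mu : ℝ} (M : CTMC (idAbsRates alpha mu))

lemma rates_tsum (z : ℕ) :
    ∑' y, idAbsRates alpha mu z y = if z = 0 then 0 else alpha + mu * z := by
  rcases z with _ | m
  · simp [idAbsRates]
  · rw [if_neg (Nat.succ_ne_zero m)]
    have hsup : ∀ y ∉ ({m, m + 2} : Finset ℕ), idAbsRates alpha mu (m+1) y = 0 := by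
      intro y hy
      simp only [Finset.mem_insert, Finset.mem_singleton] at hy
      push_neg at hy
      rw [idAbsRates]
      rw [if_neg (Nat.succ_ne_zero m), if_neg (by omega), if_neg (by omega)]
    rw [tsum_eq_sum hsup, Finset.sum_pair (by omega : m ≠ m + 2)]
    have h1 : idAbsRates alpha mu (m+1) m = mu * (m+1 : ℕ) := by
      rw [idAbsRates, if_neg (Nat.succ_ne_zero m), if_neg (by omega), if_pos rfl]
    have h2 : idAbsRates alpha mu (m+1) (m+2) = alpha := by
      rw [idAbsRates, if_neg (Nat.succ_ne_zero m), if_pos rfl]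
    rw [h1, h2]
    push_cast
    ring

lemma kern_rate {z y : ℕ} (hex : ∃ v : ℝ, 0 ≤ v ∧ M.μ (ev M v z) ≠ 0)
    (hy : z ≠ y) :
    Tendsto (fun h => kern M h z y / h) (nhdsWithin 0 (Set.Ioi 0))
      (nhds (idAbsRates alpha mu z y)) := by
  obtain ⟨hv0, hne0⟩ := hex.choose_spec
  set v0 := hex.choose
  set p0 := (M.μ (ev M v0 z)).toReal with hp0def
  have hp0 : 0 < p0 := ENNReal.toReal_pos hne0 (measure_ne_top _ _)
  have hrate := M.rate v0 z y hv0 hy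
  have heq : (fun h => kern M h z y / h)
      = fun h => ((M.μ ({ω | M.X (v0 + h) ω = y} ∩ {ω | M.X v0 ω = z})).toReal / h) / p0 := by
    funext h
    rw [kern, dif_pos hex]
    show (M.μ (ev M (v0 + h) y ∩ ev M v0 z)).toReal / p0 / h
      = (M.μ (ev M (v0 + h) y ∩ ev M v0 z)).toReal / h / p0
    ring
  rw [heq]
  have hT := hrate.div_const p0
  have hval : idAbsRates alpha mu z y * (M.μ {ω | M.X v0 ω = z}).toReal / p0
      = idAbsRates alpha mu z y := by
    show idAbsRates alpha mu z y * p0 / p0 = _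
    field_simp
  rwa [hval] at hT

lemma kern_stay {z : ℕ} (hex : ∃ v : ℝ, 0 ≤ v ∧ M.μ (ev M v z) ≠ 0) :
    Tendsto (fun h => (kern M h z z - 1) / h) (nhdsWithin 0 (Set.Ioi 0))
      (nhds (-(∑' y, idAbsRates alpha mu z y))) := by
  obtain ⟨hv0, hne0⟩ := hex.choose_spec
  set v0 := hex.choose
  set p0 := (M.μ (ev M v0 z)).toReal with hp0def
  have hp0 : 0 < p0 := ENNReal.toReal_pos hne0 (measure_ne_top _ _)
  have hrate := M.rate_stay v0 z hv0
  have heq : (fun h => (kern M h z z - 1) / h)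
      = fun h => (((M.μ ({ω | M.X (v0 + h) ω = z} ∩ {ω | M.X v0 ω = z})).toReal
          - (M.μ {ω | M.X v0 ω = z}).toReal) / h) / p0 := by
    funext h
    rw [kern, dif_pos hex]
    show ((M.μ (ev M (v0 + h) z ∩ ev M v0 z)).toReal / p0 - 1) / h = _
    have : (M.μ (ev M (v0+h) z ∩ ev M v0 z)).toReal / p0 - 1
        = ((M.μ (ev M (v0+h) z ∩ ev M v0 z)).toReal - p0) / p0 := by
      field_simp
    rw [this]
    show ((M.μ (ev M (v0+h) z ∩ ev M v0 z)).toReal - p0) / p0 / h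
      = ((M.μ (ev M (v0+h) z ∩ ev M v0 z)).toReal - p0) / h / p0
    ring
  rw [heq]
  have hT := hrate.div_const p0
  have hval : -(∑' y, idAbsRates alpha mu z y) * (M.μ {ω | M.X v0 ω = z}).toReal / p0
      = -(∑' y, idAbsRates alpha mu z y) := by
    show -(∑' y, idAbsRates alpha mu z y) * p0 / p0 = _
    field_simp
  rwa [hval] at hT

end IDH

namespace IDH

variable {alpha mu : ℝ} (M : CTMC (idAbsRates alpha mu))

lemma rate_up (m : ℕ) : idAbsRates alpha mu (m+1) (m+2) = alpha := by
  rw [idAbsRates]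
  rw [if_neg (Nat.succ_ne_zero m), if_pos rfl]

lemma rate_down (m : ℕ) : idAbsRates alpha mu (m+1) m = mu * ((m+1 : ℕ) : ℝ) := by
  rw [idAbsRates]
  rw [if_neg (Nat.succ_ne_zero m), if_neg (by omega), if_pos rfl]

lemma tsum_split_le (Φ g : ℕ → ℝ) (cap : ℝ)
    (hΦ0 : ∀ y, 0 ≤ Φ y) (hΦc : ∀ y, Φ y ≤ cap) (hg0 : ∀ y, 0 ≤ g y)
    (hgs : Summable g) (hg1 : ∑' y, g y ≤ 1) (s : Finset ℕ) :
    ∑' y, Φ y * g y ≤ ∑ y ∈ s, Φ y * g y + cap * (1 - ∑ y ∈ s, g y) := by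
  have hcap0 : 0 ≤ cap := le_trans (hΦ0 0) (hΦc 0)
  have hfs : Summable (fun y => Φ y * g y) :=
    Summable.of_nonneg_of_le (fun y => mul_nonneg (hΦ0 y) (hg0 y))
      (fun y => mul_le_mul_of_nonneg_right (hΦc y) (hg0 y)) (hgs.mul_left cap)
  have h1 := Summable.tsum_subtype_add_tsum_subtype_compl hfs (↑s : Set ℕ)
  have h2 := Summable.tsum_subtype_add_tsum_subtype_compl hgs (↑s : Set ℕ)
  have e1 : ∑' (x : (↑s : Set ℕ)), Φ x * g x = ∑ y ∈ s, Φ y * g y :=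
    Finset.tsum_subtype' s (fun y => Φ y * g y)
  have e2 : ∑' (x : (↑s : Set ℕ)), g x = ∑ y ∈ s, g y :=
    Finset.tsum_subtype' s g
  have hb : ∑' (x : ((↑s : Set ℕ)ᶜ : Set ℕ)), Φ (x:ℕ) * g (x:ℕ)
      ≤ cap * ∑' (x : ((↑s : Set ℕ)ᶜ : Set ℕ)), g (x:ℕ) := by
    rw [← tsum_mul_left]
    exact Summable.tsum_le_tsum (fun x => mul_le_mul_of_nonneg_right (hΦc x) (hg0 x))
      (hfs.subtype _) ((hgs.mul_left cap).subtype _)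
  have hgc : ∑' (x : ((↑s : Set ℕ)ᶜ : Set ℕ)), g (x:ℕ) ≤ 1 - ∑ y ∈ s, g y := by
    rw [e2] at h2
    linarith
  have hgc0 : 0 ≤ ∑' (x : ((↑s : Set ℕ)ᶜ : Set ℕ)), g (x:ℕ) :=
    tsum_nonneg (fun x => hg0 x)
  rw [← h1, e1]
  nlinarith [hb, hgc, hcap0, hgc0]

lemma step_main (ha : 0 < alpha) (hm : 0 < mu) (l : ℕ) {ε : ℝ} (hε : 0 < ε) :
    ∀ᶠ h in nhdsWithin (0:ℝ) (Set.Ioi 0), ∀ z : ℕ,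
      ∑' y, PhiF (mu/alpha) (2*l) y * kern M h z y
        ≤ PhiF (mu/alpha) (2*l) z + ε * h := by
  set rho := mu / alpha with hrhodef
  have hrho : 0 < rho := by positivity
  set Φ : ℕ → ℝ := fun y => PhiF rho (2*l) y with hΦdef
  set cap : ℝ := phiF rho (2*l) with hcapdef
  have hΦ0 : ∀ y, 0 ≤ Φ y := fun y => PhiF_nonneg hrho _ y
  have hΦc : ∀ y, Φ y ≤ cap := fun y => PhiF_le_cap hrho _ y
  have hcap0 : 0 ≤ cap := le_trans (hΦ0 0) (hΦc 0)
  have hh0 : ∀ᶠ h in nhdsWithin (0:ℝ) (Set.Ioi 0), (0:ℝ) < h := by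
    filter_upwards [self_mem_nhdsWithin] with h hh using hh
  have hz_big : ∀ z : ℕ, 2*l ≤ z → ∀ h : ℝ, 0 < h →
      ∑' y, Φ y * kern M h z y ≤ Φ z + ε * h := by
    intro z hz h hh
    have hfs : Summable (fun y => Φ y * kern M h z y) :=
      Summable.of_nonneg_of_le (fun y => mul_nonneg (hΦ0 y) (kern_nonneg M h z y))
        (fun y => mul_le_mul_of_nonneg_right (hΦc y) (kern_nonneg M h z y))
        ((kern_summable M h z).mul_left cap)
    have h1 : ∑' y, Φ y * kern M h z y ≤ ∑' y, cap * kern M h z y :=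
      Summable.tsum_le_tsum (fun y => mul_le_mul_of_nonneg_right (hΦc y) (kern_nonneg M h z y))
        hfs ((kern_summable M h z).mul_left cap)
    have h2 : ∑' y, cap * kern M h z y ≤ cap := by
      rw [tsum_mul_left]
      nlinarith [kern_tsum_le_one M h hh.le z,
        (tsum_nonneg (fun y => kern_nonneg M h z y) : 0 ≤ ∑' y, kern M h z y)]
    have h3 : Φ z = cap := PhiF_eq_cap hrho hz
    nlinarith [mul_pos hε hh]
  have hz_small : ∀ z : ℕ, ∀ᶠ h in nhdsWithin (0:ℝ) (Set.Ioi 0),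
      ∑' y, Φ y * kern M h z y ≤ Φ z + ε * h := by
    intro z
    by_cases hex : ∃ v : ℝ, 0 ≤ v ∧ M.μ (ev M v z) ≠ 0
    swap
    · filter_upwards [hh0] with h hh
      have hk : ∀ y, kern M h z y = 0 := by
        intro y; rw [kern, dif_neg hex]
      have h0 : ∑' y, Φ y * kern M h z y = 0 := by simp [hk]
      rw [h0]
      nlinarith [hΦ0 z, mul_pos hε hh]
    · rcases z with _ | m
      · -- z = 0
        have hstay := kern_stay M hex
        have hl0 : -(∑' y, idAbsRates alpha mu 0 y) = 0 := by
          rw [rates_tsum, if_pos rfl]; ring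
        rw [hl0] at hstay
        have hlim : Tendsto (fun h => (Φ 0 - cap) * ((kern M h 0 0 - 1)/h))
            (nhdsWithin (0:ℝ) (Set.Ioi 0)) (nhds ((Φ 0 - cap) * 0)) :=
          hstay.const_mul _
        rw [mul_zero] at hlim
        have hev := hlim.eventually (gt_mem_nhds hε)
        filter_upwards [hev, hh0] with h hG hh
        have hsplit := tsum_split_le Φ (fun y => kern M h 0 y) cap hΦ0 hΦc
          (fun y => kern_nonneg M h 0 y) (kern_summable M h 0)
          (kern_tsum_le_one M h hh.le 0) ({0} : Finset ℕ)
        rw [Finset.sum_singleton, Finset.sum_singleton] at hsplit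
        have hkey : (Φ 0 - cap) * (kern M h 0 0 - 1) ≤ ε * h := by
          have heq : (Φ 0 - cap) * (kern M h 0 0 - 1)
              = ((Φ 0 - cap) * ((kern M h 0 0 - 1)/h)) * h := by
            field_simp
          rw [heq]
          nlinarith [hG, hh]
        have hring : Φ 0 * kern M h 0 0 + cap * (1 - kern M h 0 0)
            = Φ 0 + (Φ 0 - cap) * (kern M h 0 0 - 1) := by ring
        linarith
      · -- z = m+1
        set z := m + 1 with hzdef
        have hdown0 := kern_rate M hex (show z ≠ m by omega)
        rw [rate_down] at hdown0
        have hup0 := kern_rate M hex (show z ≠ m + 2 by omega)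
        rw [rate_up] at hup0
        have hstay0 := kern_stay M hex
        have hts : -(∑' y, idAbsRates alpha mu z y) = -(alpha + mu * ((z:ℕ):ℝ)) := by
          rw [rates_tsum, if_neg (by omega)]
        rw [hts] at hstay0
        have hlimG : Tendsto (fun h =>
            (Φ m - cap) * (kern M h z m / h)
            + (Φ z - cap) * ((kern M h z z - 1)/h)
            + (Φ (m+2) - cap) * (kern M h z (m+2) / h))
            (nhdsWithin (0:ℝ) (Set.Ioi 0))
            (nhds ((Φ m - cap) * (mu * ((z:ℕ):ℝ))
              + (Φ z - cap) * (-(alpha + mu * ((z:ℕ):ℝ)))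
              + (Φ (m+2) - cap) * alpha)) :=
          ((hdown0.const_mul _).add (hstay0.const_mul _)).add (hup0.const_mul _)
        have hLle : (Φ m - cap) * (mu * ((z:ℕ):ℝ))
              + (Φ z - cap) * (-(alpha + mu * ((z:ℕ):ℝ)))
              + (Φ (m+2) - cap) * alpha ≤ 0 := by
          have hsh := PhiF_superharmonic hrho ha hm hrhodef (2*l) m
          rw [hΦdef]
          rw [hzdef]
          push_cast
          push_cast at hsh
          nlinarith [hsh]
        have hev := hlimG.eventually (gt_mem_nhds (lt_of_le_of_lt hLle hε))
        filter_upwards [hev, hh0] with h hG hh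
        have hsplit := tsum_split_le Φ (fun y => kern M h z y) cap hΦ0 hΦc
          (fun y => kern_nonneg M h z y) (kern_summable M h z)
          (kern_tsum_le_one M h hh.le z) ({m, m+1, m+2} : Finset ℕ)
        have hsum3 : ∀ f : ℕ → ℝ, ∑ y ∈ ({m, m+1, m+2} : Finset ℕ), f y
            = f m + f (m+1) + f (m+2) := by
          intro f
          rw [show ({m, m+1, m+2} : Finset ℕ)
              = insert m (insert (m+1) ({m+2} : Finset ℕ)) from rfl]
          rw [Finset.sum_insert (by simp), Finset.sum_insert (by simp),
            Finset.sum_singleton]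
          ring
        rw [hsum3, hsum3] at hsplit
        have hkey : (Φ m - cap) * kern M h z m + (Φ z - cap) * (kern M h z z - 1)
            + (Φ (m+2) - cap) * kern M h z (m+2) ≤ ε * h := by
          have heq : (Φ m - cap) * kern M h z m + (Φ z - cap) * (kern M h z z - 1)
              + (Φ (m+2) - cap) * kern M h z (m+2)
              = ((Φ m - cap) * (kern M h z m / h)
                + (Φ z - cap) * ((kern M h z z - 1)/h)
                + (Φ (m+2) - cap) * (kern M h z (m+2) / h)) * h := by
            field_simp
          rw [heq]
          nlinarith [hG, hh]
        have hring : Φ m * kern M h z m + Φ (m+1) * kern M h z (m+1)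
              + Φ (m+2) * kern M h z (m+2)
              + cap * (1 - (kern M h z m + kern M h z (m+1) + kern M h z (m+2)))
            = Φ z + ((Φ m - cap) * kern M h z m + (Φ z - cap) * (kern M h z z - 1)
              + (Φ (m+2) - cap) * kern M h z (m+2)) := by
          rw [hzdef]; ring
        linarith
  have hfin : ∀ᶠ h in nhdsWithin (0:ℝ) (Set.Ioi 0),
      ∀ z ∈ Finset.range (2*l), ∑' y, Φ y * kern M h z y ≤ Φ z + ε * h :=
    (Filter.eventually_all_finset _).mpr (fun z _ => hz_small z)
  filter_upwards [hfin, hh0] with h h1 h2 z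
  rcases lt_or_ge z (2*l) with hz | hz
  · exact h1 z (Finset.mem_range.mpr hz)
  · exact hz_big z hz h h2

end IDH

namespace IDH

variable {alpha mu : ℝ} (M : CTMC (idAbsRates alpha mu))

lemma kern_le_one {h : ℝ} (hh : 0 ≤ h) (z y : ℕ) : kern M h z y ≤ 1 := by
  refine le_trans ?_ (kern_tsum_le_one M h hh z)
  exact Summable.le_tsum (kern_summable M h z) y (fun j _ => kern_nonneg M h z j)

lemma past_meas {t : ℝ} {x : ℕ} {n : ℕ} (ts : Fin n → ℝ) (xs : Fin n → ℕ) :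
    MeasurableSet (ev M t x ∩ ⋂ i, ev M (ts i) (xs i)) :=
  (ev_meas M t x).inter (MeasurableSet.iInter fun i => ev_meas M (ts i) (xs i))

lemma fact_past {t v h : ℝ} (ht : 0 ≤ t) (htv : t ≤ v) (hh : 0 ≤ h)
    {n : ℕ} (ts : Fin n → ℝ) (xs : Fin n → ℕ) (hpast : ∀ i, 0 ≤ ts i ∧ ts i ≤ t)
    (x z y : ℕ) :
    (M.μ (ev M (v+h) y ∩ ev M v z ∩ (ev M t x ∩ ⋂ i, ev M (ts i) (xs i)))).toReal
      = kern M h z y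
        * (M.μ (ev M v z ∩ (ev M t x ∩ ⋂ i, ev M (ts i) (xs i)))).toReal := by
  set P := ev M t x ∩ ⋂ i, ev M (ts i) (xs i) with hPdef
  have hP : (⋂ i, ev M ((Fin.cons t ts : Fin (n+1) → ℝ) i)
      ((Fin.cons x xs : Fin (n+1) → ℕ) i)) = P := by
    ext ω
    simp only [Set.mem_iInter, Fin.forall_fin_succ, Fin.cons_zero, Fin.cons_succ,
      hPdef, Set.mem_inter_iff]
  have hconds : ∀ i : Fin (n+1), 0 ≤ (Fin.cons t ts : Fin (n+1) → ℝ) i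
      ∧ (Fin.cons t ts : Fin (n+1) → ℝ) i ≤ v := by
    rw [Fin.forall_fin_succ]
    constructor
    · simpa using ⟨ht, htv⟩
    · intro j
      simpa using ⟨(hpast j).1, le_trans (hpast j).2 htv⟩
  have hmk := M.markov (n+1) (Fin.cons t ts) (Fin.cons x xs) v (v+h) z y hconds
    (by linarith)
  have hmk' : M.μ (ev M (v+h) y ∩ ev M v z ∩ P) * M.μ (ev M v z)
      = M.μ (ev M (v+h) y ∩ ev M v z) * M.μ (ev M v z ∩ P) := by
    rw [← hP]
    exact hmk
  by_cases hz : M.μ (ev M v z) = 0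
  · have h1 : M.μ (ev M (v+h) y ∩ ev M v z ∩ P) = 0 :=
      le_antisymm (le_trans (measure_mono
        (le_trans Set.inter_subset_left Set.inter_subset_right)) hz.le) zero_le
    have h2 : M.μ (ev M v z ∩ P) = 0 :=
      le_antisymm (le_trans (measure_mono Set.inter_subset_left) hz.le) zero_le
    simp [h1, h2]
  · have hp : 0 < (M.μ (ev M v z)).toReal :=
      ENNReal.toReal_pos hz (measure_ne_top _ _)
    have hre := congrArg ENNReal.toReal hmk'
    rw [ENNReal.toReal_mul, ENNReal.toReal_mul] at hre
    rw [kern_spec M (le_trans ht htv) hh z y] at hre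
    have := mul_right_cancel₀ hp.ne' (by linarith [hre] :
      (M.μ (ev M (v+h) y ∩ ev M v z ∩ P)).toReal * (M.μ (ev M v z)).toReal
        = (kern M h z y * (M.μ (ev M v z ∩ P)).toReal) * (M.μ (ev M v z)).toReal)
    exact this

lemma one_step (ha : 0 < alpha) (hm : 0 < mu) (l : ℕ) {ε h : ℝ} (hε : 0 < ε)
    (hh : 0 < h)
    (hstep : ∀ z, ∑' y, PhiF (mu/alpha) (2*l) y * kern M h z y
      ≤ PhiF (mu/alpha) (2*l) z + ε * h)
    {t v : ℝ} (ht : 0 ≤ t) (htv : t ≤ v)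
    (x : ℕ) {n : ℕ} (ts : Fin n → ℝ) (xs : Fin n → ℕ)
    (hpast : ∀ i, 0 ≤ ts i ∧ ts i ≤ t) :
    ∑' y, PhiF (mu/alpha) (2*l) y
        * (M.μ (ev M (v+h) y ∩ (ev M t x ∩ ⋂ i, ev M (ts i) (xs i)))).toReal
      ≤ (∑' y, PhiF (mu/alpha) (2*l) y
          * (M.μ (ev M v y ∩ (ev M t x ∩ ⋂ i, ev M (ts i) (xs i)))).toReal)
        + ε * h * (M.μ (ev M t x ∩ ⋂ i, ev M (ts i) (xs i))).toReal := by
  set rho := mu / alpha with hrhodef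
  have hrho : 0 < rho := by positivity
  set Φ : ℕ → ℝ := fun y => PhiF rho (2*l) y with hΦdef
  set cap : ℝ := phiF rho (2*l) with hcapdef
  have hΦ0 : ∀ y, 0 ≤ Φ y := fun y => PhiF_nonneg hrho _ y
  have hΦc : ∀ y, Φ y ≤ cap := fun y => PhiF_le_cap hrho _ y
  have hcap0 : 0 ≤ cap := le_trans (hΦ0 0) (hΦc 0)
  set P := ev M t x ∩ ⋂ i, ev M (ts i) (xs i) with hPdef
  have hPmeas : MeasurableSet P := past_meas M ts xs
  set mP : ℕ → ℝ := fun z => (M.μ (ev M v z ∩ P)).toReal with hmPdef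
  set mP' : ℕ → ℝ := fun y => (M.μ (ev M (v+h) y ∩ P)).toReal with hmPdef'
  have hmP0 : ∀ z, 0 ≤ mP z := fun z => ENNReal.toReal_nonneg
  have hmP0' : ∀ z, 0 ≤ mP' z := fun z => ENNReal.toReal_nonneg
  have hms : Summable mP := by
    have := part_summable M P hPmeas v
    exact this.congr fun z => by rw [Set.inter_comm]
  have hms' : Summable mP' := by
    have := part_summable M P hPmeas (v+h)
    exact this.congr fun z => by rw [Set.inter_comm]
  have htot : ∑' z, mP z = (M.μ P).toReal := by
    rw [hmPdef]
    have := part_toReal M P hPmeas v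
    rw [this]
    exact tsum_congr fun z => by rw [Set.inter_comm]
  have hchain : ∀ y, mP' y = ∑' z, kern M h z y * mP z := by
    intro y
    have h1 := part_toReal M (ev M (v+h) y ∩ P)
      ((ev_meas M _ _).inter hPmeas) v
    show (M.μ (ev M (v+h) y ∩ P)).toReal = ∑' z, kern M h z y * mP z
    rw [h1]
    refine tsum_congr fun z => ?_
    rw [Set.inter_right_comm]
    exact fact_past M ht htv hh.le ts xs hpast x z y
  -- summability of the double family
  have hf0 : ∀ y z, 0 ≤ Φ y * (kern M h z y * mP z) := fun y z =>
    mul_nonneg (hΦ0 y) (mul_nonneg (kern_nonneg M h z y) (hmP0 z))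
  have hslice : ∀ y, Summable fun z => Φ y * (kern M h z y * mP z) := by
    intro y
    refine Summable.of_nonneg_of_le (fun z => hf0 y z) (fun z => ?_)
      (hms.mul_left (Φ y))
    have := mul_le_mul_of_nonneg_right (kern_le_one M hh.le z y) (hmP0 z)
    rw [one_mul] at this
    exact mul_le_mul_of_nonneg_left this (hΦ0 y)
  have hcol : ∀ z, Summable fun y => Φ y * (kern M h z y * mP z) := by
    intro z
    refine Summable.of_nonneg_of_le (fun y => hf0 y z) (fun y => ?_)
      (((kern_summable M h z).mul_left cap).mul_right (mP z))
    calc Φ y * (kern M h z y * mP z) ≤ cap * (kern M h z y * mP z) :=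
          mul_le_mul_of_nonneg_right (hΦc y)
            (mul_nonneg (kern_nonneg M h z y) (hmP0 z))
      _ = cap * kern M h z y * mP z := by ring
  have hsums : Summable fun y => ∑' z, Φ y * (kern M h z y * mP z) := by
    have heq : (fun y => ∑' z, Φ y * (kern M h z y * mP z))
        = fun y => Φ y * mP' y := by
      funext y
      rw [hchain y, ← tsum_mul_left]
    rw [heq]
    exact Summable.of_nonneg_of_le (fun y => mul_nonneg (hΦ0 y) (hmP0' y))
      (fun y => mul_le_mul_of_nonneg_right (hΦc y) (hmP0' y))
      (hms'.mul_left cap)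
  have hunc : Summable (Function.uncurry fun y z => Φ y * (kern M h z y * mP z)) :=
    (summable_prod_of_nonneg (fun p => hf0 p.1 p.2)).mpr ⟨hslice, hsums⟩
  have hswap : ∑' y, ∑' z, Φ y * (kern M h z y * mP z)
      = ∑' z, ∑' y, Φ y * (kern M h z y * mP z) :=
    (Summable.tsum_comm' hunc hslice hcol).symm
  have hLHS : ∑' y, Φ y * mP' y = ∑' z, (∑' y, Φ y * kern M h z y) * mP z := by
    calc ∑' y, Φ y * mP' y = ∑' y, ∑' z, Φ y * (kern M h z y * mP z) := by
          refine tsum_congr fun y => ?_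
          rw [hchain y, ← tsum_mul_left]
      _ = ∑' z, ∑' y, Φ y * (kern M h z y * mP z) := hswap
      _ = ∑' z, (∑' y, Φ y * kern M h z y) * mP z := by
          refine tsum_congr fun z => ?_
          rw [← tsum_mul_right]
          exact tsum_congr fun y => by ring
  rw [hLHS]
  -- bound each z-term
  have hterm : ∀ z, (∑' y, Φ y * kern M h z y) * mP z ≤ (Φ z + ε * h) * mP z :=
    fun z => mul_le_mul_of_nonneg_right (hstep z) (hmP0 z)
  have hsumL : Summable fun z => (∑' y, Φ y * kern M h z y) * mP z := by
    refine Summable.of_nonneg_of_le (fun z => mul_nonneg (tsum_nonneg fun y =>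
      mul_nonneg (hΦ0 y) (kern_nonneg M h z y)) (hmP0 z)) (fun z => ?_)
      (hms.mul_left (cap + ε * h))
    refine mul_le_mul_of_nonneg_right ?_ (hmP0 z)
    exact le_trans (hstep z) (by nlinarith [hΦc z, mul_pos hε hh])
  have hsumR : Summable fun z => (Φ z + ε * h) * mP z := by
    have hnn : ∀ z, 0 ≤ Φ z + ε * h := fun z => by nlinarith [hΦ0 z, mul_pos hε hh]
    refine Summable.of_nonneg_of_le (fun z => mul_nonneg (hnn z) (hmP0 z))
      (fun z => ?_) (hms.mul_left (cap + ε * h))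
    exact mul_le_mul_of_nonneg_right (by nlinarith [hΦc z]) (hmP0 z)
  have hle := Summable.tsum_le_tsum hterm hsumL hsumR
  refine le_trans hle ?_
  have hfinal : ∑' z, (Φ z + ε * h) * mP z
      = (∑' z, Φ z * mP z) + ε * h * (M.μ P).toReal := by
    have hd : (fun z => (Φ z + ε * h) * mP z)
        = fun z => Φ z * mP z + (ε * h) * mP z := by
      funext z; ring
    have hs1 : Summable fun z => Φ z * mP z :=
      Summable.of_nonneg_of_le (fun z => mul_nonneg (hΦ0 z) (hmP0 z))
        (fun z => mul_le_mul_of_nonneg_right (hΦc z) (hmP0 z)) (hms.mul_left cap)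
    rw [hd, Summable.tsum_add hs1 (hms.mul_left (ε * h)), tsum_mul_left, htot]
  rw [hfinal]

end IDH

namespace IDH

variable {alpha mu : ℝ} (M : CTMC (idAbsRates alpha mu))

lemma cyl_step (ha : 0 < alpha) (hm : 0 < mu) (l : ℕ) {t s : ℝ} (ht : 0 ≤ t)
    (hts : t ≤ s) (x : ℕ) {n : ℕ} (ts : Fin n → ℝ) (xs : Fin n → ℕ)
    (hpast : ∀ i, 0 ≤ ts i ∧ ts i ≤ t) :
    ∑' y, PhiF (mu/alpha) (2*l) y
        * (M.μ (ev M s y ∩ (ev M t x ∩ ⋂ i, ev M (ts i) (xs i)))).toReal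
      ≤ PhiF (mu/alpha) (2*l) x
        * (M.μ (ev M t x ∩ ⋂ i, ev M (ts i) (xs i))).toReal := by
  set rho := mu / alpha with hrhodef
  have hrho : 0 < rho := by positivity
  set Φ : ℕ → ℝ := fun y => PhiF rho (2*l) y with hΦdef
  set P := ev M t x ∩ ⋂ i, ev M (ts i) (xs i) with hPdef
  have hPsub : P ⊆ ev M t x := Set.inter_subset_left
  set F : ℝ → ℝ := fun v => ∑' y, Φ y * (M.μ (ev M v y ∩ P)).toReal with hFdef
  show F s ≤ Φ x * (M.μ P).toReal
  have hFt : F t = Φ x * (M.μ P).toReal := by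
    show ∑' y, Φ y * (M.μ (ev M t y ∩ P)).toReal = Φ x * (M.μ P).toReal
    have hz : ∀ y, y ≠ x → Φ y * (M.μ (ev M t y ∩ P)).toReal = 0 := by
      intro y hy
      have hemp : ev M t y ∩ P = ∅ := by
        ext ω
        simp only [Set.mem_inter_iff, Set.mem_empty_iff_false, iff_false, not_and]
        intro h1 h2
        exact absurd ((h1 : M.X t ω = y).symm.trans (hPsub h2)) hy
      rw [hemp]
      simp
    have hxx : ev M t x ∩ P = P := Set.inter_eq_self_of_subset_right hPsub
    rw [tsum_eq_single x hz, hxx]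
  rcases eq_or_lt_of_le hts with heq | hlt
  · rw [← heq]
    exact le_of_eq hFt
  · have hKnn : 0 ≤ (s - t) * (M.μ P).toReal := by
      have h0 := ENNReal.toReal_nonneg (a := M.μ P)
      nlinarith
    have hmain : ∀ ε : ℝ, 0 < ε → F s ≤ Φ x * (M.μ P).toReal
        + ε * ((s - t) * (M.μ P).toReal) := by
      intro ε hε
      have hev := step_main M ha hm l hε
      obtain ⟨δ, hδ, hsub⟩ := Metric.mem_nhdsWithin_iff.mp hev
      obtain ⟨N, hN⟩ := exists_nat_gt ((s - t)/δ)
      set nn : ℕ := N + 1 with hnndef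
      have hnn0 : (0:ℝ) < (nn:ℝ) := by rw [hnndef]; positivity
      set d := (s - t)/(nn:ℝ) with hddef
      have hst : (0:ℝ) < s - t := by linarith
      have hd0 : 0 < d := by rw [hddef]; positivity
      have hdδ : d < δ := by
        rw [hddef, div_lt_iff₀ hnn0]
        rw [div_lt_iff₀ hδ] at hN
        have : (N:ℝ) ≤ (nn:ℝ) := by rw [hnndef]; push_cast; linarith
        nlinarith
      have hdmem : d ∈ Metric.ball (0:ℝ) δ ∩ Set.Ioi 0 := by
        constructor
        · simp only [Metric.mem_ball, Real.dist_eq, sub_zero]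
          rw [abs_of_pos hd0]
          exact hdδ
        · exact hd0
      have hstep : ∀ z, ∑' y, Φ y * kern M d z y ≤ Φ z + ε * d := hsub hdmem
      have hiter : ∀ k : ℕ, F (t + k * d) ≤ F t + k * (ε * d * (M.μ P).toReal) := by
        intro k
        induction k with
        | zero => simp
        | succ k ih =>
          have hkd : (0:ℝ) ≤ (k:ℝ) * d := by positivity
          have hv : t ≤ t + k * d := by linarith
          have hone := one_step M ha hm l hε hd0 hstep ht hv x ts xs hpast
          have hcast : t + ((k:ℕ)+1 : ℕ) * d = (t + (k:ℝ) * d) + d := by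
            push_cast; ring
          rw [hcast]
          refine le_trans hone ?_
          push_cast
          linarith
      have hnd : t + (nn:ℝ) * d = s := by
        rw [hddef]
        field_simp
        ring
      have hiter' := hiter nn
      rw [hnd, hFt] at hiter'
      have hnnd : (nn:ℝ) * d = s - t := by
        rw [hddef]
        field_simp
      have : (nn:ℝ) * (ε * d * (M.μ P).toReal) = ε * ((s-t) * (M.μ P).toReal) := by
        rw [← hnnd]; ring
      linarith
    refine le_of_forall_pos_le_add fun η hη => ?_
    rcases eq_or_lt_of_le hKnn with hK0 | hKpos
    · have h1 := hmain 1 one_pos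
      rw [← hK0] at h1
      linarith
    · have h1 := hmain (η/((s - t) * (M.μ P).toReal)) (by positivity)
      have h2 : (η/((s - t) * (M.μ P).toReal)) * ((s - t) * (M.μ P).toReal) = η := by
        exact div_mul_cancel₀ η hKpos.ne'
      rw [h2] at h1
      exact h1

end IDH

namespace IDH

variable {alpha mu : ℝ} (M : CTMC (idAbsRates alpha mu))

lemma iInter_cons {t : ℝ} {x : ℕ} {n : ℕ} (ts : Fin n → ℝ) (xs : Fin n → ℕ) :
    (⋂ i, ev M ((Fin.cons t ts : Fin (n+1) → ℝ) i)
      ((Fin.cons x xs : Fin (n+1) → ℕ) i))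
    = ev M t x ∩ ⋂ i, ev M (ts i) (xs i) := by
  ext ω
  simp only [Set.mem_iInter, Fin.forall_fin_succ, Fin.cons_zero, Fin.cons_succ,
    Set.mem_inter_iff]

lemma hit_bound (ha : 0 < alpha) (hm : 0 < mu) (l : ℕ) :
    ∀ (qs : List ℝ), qs.Pairwise (· ≤ ·) →
    ∀ (t : ℝ) (x : ℕ) {n : ℕ} (ts : Fin n → ℝ) (xs : Fin n → ℕ),
      0 ≤ t → (∀ r ∈ qs, t ≤ r) → (∀ i, 0 ≤ ts i ∧ ts i ≤ t) →
      phiF (mu/alpha) (2*l)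
          * (M.μ ((ev M t x ∩ ⋂ i, ev M (ts i) (xs i))
            ∩ ⋃ r ∈ qs, ev M r (2*l))).toReal
        ≤ PhiF (mu/alpha) (2*l) x
          * (M.μ (ev M t x ∩ ⋂ i, ev M (ts i) (xs i))).toReal := by
  have hrho : 0 < mu / alpha := by positivity
  intro qs
  induction qs with
  | nil =>
    intro _ t x n ts xs ht hge hpast
    simp only [List.not_mem_nil, Set.iUnion_of_empty, Set.iUnion_empty,
      Set.inter_empty, measure_empty, ENNReal.toReal_zero, mul_zero]
    exact mul_nonneg (PhiF_nonneg hrho _ x) ENNReal.toReal_nonneg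
  | cons r qs ih =>
    intro hpw t x n ts xs ht hge hpast
    obtain ⟨hhead, hpw'⟩ := List.pairwise_cons.mp hpw
    have htr : t ≤ r := hge r (List.mem_cons_self)
    have hr0 : 0 ≤ r := le_trans ht htr
    set rho := mu / alpha with hrhodef
    set Φ : ℕ → ℝ := fun y => PhiF rho (2*l) y with hΦdef
    set cap : ℝ := phiF rho (2*l) with hcapdef
    have hΦ0 : ∀ y, 0 ≤ Φ y := fun y => PhiF_nonneg hrho _ y
    have hΦc : ∀ y, Φ y ≤ cap := fun y => PhiF_le_cap hrho _ y
    have hcap0 : 0 ≤ cap := le_trans (hΦ0 0) (hΦc 0)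
    set P := ev M t x ∩ ⋂ i, ev M (ts i) (xs i) with hPdef
    have hPmeas : MeasurableSet P := past_meas M ts xs
    set Urest : Set M.Omega := ⋃ r' ∈ qs, ev M r' (2*l) with hUrestdef
    -- the union over r :: qs
    have hUcons : (⋃ r' ∈ (r :: qs : List ℝ), ev M r' (2*l))
        = ev M r (2*l) ∪ Urest := by
      ext ω
      simp [hUrestdef, List.mem_cons, Set.mem_iUnion]
    set S : ℕ → Set M.Omega := fun z =>
      (ev M r z ∩ P) ∩ (if z = 2*l then Set.univ else Urest) with hSdef
    have hSsub : ∀ z, S z ⊆ ev M r z ∩ P := fun z => Set.inter_subset_left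
    have hcover : P ∩ (ev M r (2*l) ∪ Urest) ⊆ ⋃ z, S z := by
      intro ω hω
      obtain ⟨hP, hU⟩ := hω
      refine Set.mem_iUnion.mpr ⟨M.X r ω, ?_⟩
      rw [hSdef]
      by_cases hz : M.X r ω = 2*l
      · simp only [if_pos hz]
        exact ⟨⟨rfl, hP⟩, Set.mem_univ ω⟩
      · simp only [if_neg hz]
        refine ⟨⟨rfl, hP⟩, ?_⟩
        rcases hU with h1 | h2
        · exact absurd h1 hz
        · exact h2
    have hμle : M.μ (P ∩ (ev M r (2*l) ∪ Urest)) ≤ ∑' z, M.μ (S z) :=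
      le_trans (measure_mono hcover) (measure_iUnion_le S)
    have hne : (∑' z, M.μ (S z)) ≠ ⊤ := by
      have hb : ∑' z, M.μ (S z) ≤ ∑' z, M.μ (P ∩ ev M r z) := by
        refine ENNReal.tsum_le_tsum fun z => measure_mono ?_
        refine le_trans (hSsub z) ?_
        rw [Set.inter_comm]
      rw [← part_enn M P hPmeas r] at hb
      exact ne_top_of_le_ne_top (measure_ne_top _ _) hb
    have hreal : (M.μ (P ∩ (ev M r (2*l) ∪ Urest))).toReal
        ≤ ∑' z, (M.μ (S z)).toReal := by
      rw [← ENNReal.tsum_toReal_eq (fun z => measure_ne_top _ _)]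
      exact ENNReal.toReal_mono hne hμle
    -- summability facts
    have hmsum : Summable fun z => (M.μ (ev M r z ∩ P)).toReal := by
      have := part_summable M P hPmeas r
      exact this.congr fun z => by rw [Set.inter_comm]
    have hSsum : Summable fun z => (M.μ (S z)).toReal := by
      refine Summable.of_nonneg_of_le (fun z => ENNReal.toReal_nonneg)
        (fun z => ?_) hmsum
      exact ENNReal.toReal_mono (measure_ne_top _ _) (measure_mono (hSsub z))
    -- per-z bound
    have hterm : ∀ z, cap * (M.μ (S z)).toReal
        ≤ Φ z * (M.μ (ev M r z ∩ P)).toReal := by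
      intro z
      by_cases hz : z = 2*l
      · subst hz
        have hS : S (2*l) = ev M r (2*l) ∩ P := by
          rw [hSdef]
          simp
        rw [hS]
        have : Φ (2*l) = cap := PhiF_eq_cap hrho le_rfl
        rw [this]
      · have hS : S z = (ev M r z ∩ P) ∩ Urest := by
          rw [hSdef]
          simp [hz]
        have hPr : ev M r z ∩ P
            = ev M r z ∩ ⋂ i, ev M ((Fin.cons t ts : Fin (n+1) → ℝ) i)
              ((Fin.cons x xs : Fin (n+1) → ℕ) i) := by
          rw [iInter_cons M ts xs]
        have hpast' : ∀ i : Fin (n+1), 0 ≤ (Fin.cons t ts : Fin (n+1) → ℝ) i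
            ∧ (Fin.cons t ts : Fin (n+1) → ℝ) i ≤ r := by
          rw [Fin.forall_fin_succ]
          constructor
          · simpa using ⟨ht, htr⟩
          · intro j
            simpa using ⟨(hpast j).1, le_trans (hpast j).2 htr⟩
        have hih := ih hpw' r z (Fin.cons t ts) (Fin.cons x xs) hr0
          (fun r' hr' => hhead r' hr') hpast'
        rw [iInter_cons M ts xs] at hih
        rw [hS]
        exact hih
    -- combine
    have hsum_le : ∑' z, cap * (M.μ (S z)).toReal
        ≤ ∑' z, Φ z * (M.μ (ev M r z ∩ P)).toReal := by
      refine Summable.tsum_le_tsum hterm (hSsum.mul_left cap) ?_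
      exact Summable.of_nonneg_of_le
        (fun z => mul_nonneg (hΦ0 z) ENNReal.toReal_nonneg)
        (fun z => mul_le_mul_of_nonneg_right (hΦc z) ENNReal.toReal_nonneg)
        (hmsum.mul_left cap)
    have hcyl := cyl_step M ha hm l ht htr x ts xs hpast
    rw [hUcons]
    calc cap * (M.μ (P ∩ (ev M r (2*l) ∪ Urest))).toReal
        ≤ cap * ∑' z, (M.μ (S z)).toReal :=
          mul_le_mul_of_nonneg_left hreal hcap0
      _ = ∑' z, cap * (M.μ (S z)).toReal := by rw [tsum_mul_left]
      _ ≤ ∑' z, Φ z * (M.μ (ev M r z ∩ P)).toReal := hsum_le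
      _ ≤ Φ x * (M.μ P).toReal := hcyl

end IDH

namespace IDH

variable {alpha mu : ℝ} (M : CTMC (idAbsRates alpha mu))

lemma main_bound (ha : 0 < alpha) (hm : 0 < mu) (l : ℕ) (hl1 : 1 ≤ l)
    (hinit : ∀ᵐ ω ∂M.μ, M.X 0 ω = l) :
    (M.μ {ω | ∃ t : ℝ, 0 ≤ t ∧ M.X t ω = 2*l}).toReal
      ≤ phiF (mu/alpha) l / phiF (mu/alpha) (2*l) := by
  set rho := mu / alpha with hrhodef
  have hrho : 0 < rho := by positivity
  set cap : ℝ := phiF rho (2*l) with hcapdef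
  have hcap : 0 < cap := phiF_pos hrho (by omega)
  set E : Set M.Omega := {ω | ∃ t : ℝ, 0 ≤ t ∧ M.X t ω = 2*l} with hEdef
  obtain ⟨f, hf⟩ : ∃ f : ℕ → ℚ, Function.Surjective f :=
    ⟨_, (Denumerable.eqv ℚ).symm.surjective⟩
  set r : ℕ → ℝ := fun i => |((f i : ℚ) : ℝ)| with hrdef
  have hr0 : ∀ i, 0 ≤ r i := fun i => abs_nonneg _
  have hcov : E ⊆ ⋃ i : ℕ, ev M (r i) (2*l) := by
    rintro ω ⟨t, ht, hX⟩
    obtain ⟨ε, hε, hconst⟩ := M.rightCont ω t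
    obtain ⟨q, hq1, hq2⟩ := exists_rat_btwn (show t < t + ε by linarith)
    have hXq : M.X (q:ℝ) ω = 2*l := by
      rw [hconst (q:ℝ) hq1.le hq2]
      exact hX
    have hq0 : (0:ℝ) < (q:ℝ) := lt_of_le_of_lt ht hq1
    obtain ⟨i, hi⟩ : ∃ i, f i = q := hf q
    refine Set.mem_iUnion.mpr ⟨i, ?_⟩
    show M.X (r i) ω = 2*l
    have hri : r i = (q:ℝ) := by
      rw [hrdef]
      simp only
      rw [hi]
      exact abs_of_pos hq0
    rw [hri]
    exact hXq
  set Sn : ℕ → Set M.Omega := fun n =>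
    ev M 0 l ∩ ⋃ i ∈ Finset.range (n+1), ev M (r i) (2*l) with hSndef
  have hmono : Monotone Sn := by
    intro a b hab ω hω
    obtain ⟨h1, h2⟩ := hω
    refine ⟨h1, ?_⟩
    simp only [Set.mem_iUnion, Finset.mem_range, exists_prop] at h2 ⊢
    obtain ⟨i, hi, hev⟩ := h2
    exact ⟨i, by omega, hev⟩
  have hUnion : (⋃ n, Sn n) = ev M 0 l ∩ ⋃ i : ℕ, ev M (r i) (2*l) := by
    ext ω
    simp only [hSndef, Set.mem_iUnion, Set.mem_inter_iff, Finset.mem_range]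
    constructor
    · rintro ⟨n, h1, i, hi, h2⟩
      exact ⟨h1, i, h2⟩
    · rintro ⟨h1, i, h2⟩
      exact ⟨i, h1, i, by omega, h2⟩
  -- bound each stage
  have hstagebound : ∀ n : ℕ, M.μ (Sn n) ≤ ENNReal.ofReal (phiF rho l / cap) := by
    intro n
    set qs : List ℝ := ((Finset.range (n+1)).image r).sort (· ≤ ·) with hqsdef
    have hqs_pw : qs.Pairwise (· ≤ ·) := Finset.pairwise_sort _ _
    have hqs_mem : ∀ a, a ∈ qs ↔ ∃ i ∈ Finset.range (n+1), r i = a := by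
      intro a
      rw [hqsdef, Finset.mem_sort, Finset.mem_image]
    have hge : ∀ a ∈ qs, (0:ℝ) ≤ a := by
      intro a ha'
      obtain ⟨i, _, hi⟩ := (hqs_mem a).mp ha'
      rw [← hi]
      exact hr0 i
    have hU : (⋃ a ∈ qs, ev M a (2*l)) = ⋃ i ∈ Finset.range (n+1), ev M (r i) (2*l) := by
      ext ω
      simp only [Set.mem_iUnion, exists_prop]
      constructor
      · rintro ⟨a, haqs, hev⟩
        obtain ⟨i, hi, rfl⟩ := (hqs_mem a).mp haqs
        exact ⟨i, hi, hev⟩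
      · rintro ⟨i, hi, hev⟩
        exact ⟨r i, (hqs_mem (r i)).mpr ⟨i, hi, rfl⟩, hev⟩
    have hhit := hit_bound M ha hm l qs hqs_pw 0 l (Fin.elim0 : Fin 0 → ℝ)
      (Fin.elim0 : Fin 0 → ℕ) le_rfl hge (fun i => i.elim0)
    rw [hU] at hhit
    have hinter : (ev M 0 l ∩ ⋂ i : Fin 0, ev M (Fin.elim0 i) (Fin.elim0 i))
        = ev M 0 l := by
      rw [Set.iInter_of_empty, Set.inter_univ]
    rw [hinter] at hhit
    -- hhit : cap * (μ (ev M 0 l ∩ ⋃ ...)).toReal ≤ Φ l * (μ (ev M 0 l)).toReal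
    have hΦl : PhiF rho (2*l) l = phiF rho l := PhiF_eq_of_le hrho (by omega)
    rw [hΦl] at hhit
    have hple : (M.μ (ev M 0 l)).toReal ≤ 1 := by
      have := prob_le_one (μ := M.μ) (s := ev M 0 l)
      calc (M.μ (ev M 0 l)).toReal ≤ (1 : ENNReal).toReal :=
            ENNReal.toReal_mono (by norm_num) this
        _ = 1 := by norm_num
    have hphl0 : 0 ≤ phiF rho l := phiF_nonneg hrho l
    have hb : (M.μ (Sn n)).toReal ≤ phiF rho l / cap := by
      rw [le_div_iff₀ hcap]
      have : phiF rho l * (M.μ (ev M 0 l)).toReal ≤ phiF rho l :=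
        by nlinarith [hple, hphl0]
      calc (M.μ (Sn n)).toReal * cap = cap * (M.μ (Sn n)).toReal := by ring
        _ ≤ phiF rho l * (M.μ (ev M 0 l)).toReal := hhit
        _ ≤ phiF rho l := this
    calc M.μ (Sn n) = ENNReal.ofReal ((M.μ (Sn n)).toReal) :=
          (ENNReal.ofReal_toReal (measure_ne_top _ _)).symm
      _ ≤ ENNReal.ofReal (phiF rho l / cap) := ENNReal.ofReal_le_ofReal hb
  have hlim := tendsto_measure_iUnion_atTop (μ := M.μ) hmono
  have hUb : M.μ (⋃ n, Sn n) ≤ ENNReal.ofReal (phiF rho l / cap) :=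
    le_of_tendsto hlim (Filter.Eventually.of_forall hstagebound)
  have hnullc : M.μ ((ev M 0 l)ᶜ) = 0 := by
    have := hinit
    rw [ae_iff] at this
    exact this
  have hEbound : M.μ E ≤ ENNReal.ofReal (phiF rho l / cap) := by
    have hsplit : E ⊆ (⋃ n, Sn n) ∪ (ev M 0 l)ᶜ := by
      intro ω hω
      by_cases h0 : ω ∈ ev M 0 l
      · left
        rw [hUnion]
        exact ⟨h0, hcov hω⟩
      · right
        exact h0
    calc M.μ E ≤ M.μ ((⋃ n, Sn n) ∪ (ev M 0 l)ᶜ) := measure_mono hsplit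
      _ ≤ M.μ (⋃ n, Sn n) + M.μ ((ev M 0 l)ᶜ) := measure_union_le _ _
      _ = M.μ (⋃ n, Sn n) := by rw [hnullc, add_zero]
      _ ≤ ENNReal.ofReal (phiF rho l / cap) := hUb
  calc (M.μ E).toReal ≤ (ENNReal.ofReal (phiF rho l / cap)).toReal :=
        ENNReal.toReal_mono ENNReal.ofReal_ne_top hEbound
    _ = phiF rho l / cap :=
        ENNReal.toReal_ofReal (div_nonneg (phiF_nonneg hrho l) hcap.le)

end IDH


open IDH

/-- **Lemma 3.3 (hitting probability of immigration-death processes absorbing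
at 0).** For immigration-death processes absorbing at `0` with immigration rate
`α(N) > 0`, death rate `μ(N) > 0` and initial states `l(N) → ∞`, if
`lim l(N)μ(N)/α(N) > e`, then the probability of ever reaching the level
`2 l(N)` tends to `0`. -/
theorem id_abs_hitting_prob
    (alpha mu : ℕ → ℝ) (halpha : ∀ N, 0 < alpha N) (hmu : ∀ N, 0 < mu N)
    (l : ℕ → ℕ) (hl : Tendsto (fun N => (l N : ℝ)) atTop atTop)
    (hlim : ∃ c : ℝ, Real.exp 1 < c ∧
      ∀ᶠ N in atTop, c ≤ (l N : ℝ) * mu N / alpha N)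
    (M : ∀ N : ℕ, CTMC (idAbsRates (alpha N) (mu N)))
    (hinit : ∀ N, ∀ᵐ ω ∂(M N).μ, (M N).X 0 ω = l N) :
    Tendsto
      (fun N => ((M N).μ {ω | ∃ t : ℝ, 0 ≤ t ∧ (M N).X t ω = 2 * l N}).toReal)
      atTop (nhds 0) := by
  obtain ⟨c, hc, hev⟩ := hlim
  have he1 : (1:ℝ) < Real.exp 1 := by
    have := Real.exp_one_gt_d9; linarith
  have hc0 : (0:ℝ) < c := by linarith
  set θ : ℝ := max (Real.exp 1 / c) (1 / c) with hθdef
  have hθ0 : 0 < θ := lt_max_of_lt_right (by positivity)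
  have hθ1 : θ < 1 := by
    apply max_lt
    · rw [div_lt_one hc0]; exact hc
    · rw [div_lt_one hc0]; linarith
  have hg : Tendsto (fun m : ℕ => (m:ℝ) * θ ^ m) atTop (nhds 0) := by
    have hs : Summable (fun m : ℕ => (m:ℝ) ^ 1 * θ ^ m) :=
      summable_pow_mul_geometric_of_norm_lt_one 1
        (by rw [Real.norm_eq_abs, abs_of_pos hθ0]; exact hθ1)
    have := hs.tendsto_atTop_zero
    simpa using this
  have hlnat : Tendsto l atTop atTop := tendsto_natCast_atTop_iff.mp hl
  have hcomp : Tendsto (fun N => (l N : ℝ) * θ ^ (l N)) atTop (nhds 0) :=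
    hg.comp hlnat
  have hl1ev : ∀ᶠ N in atTop, 1 ≤ l N := hlnat.eventually_ge_atTop 1
  refine squeeze_zero' (Filter.Eventually.of_forall fun N => ENNReal.toReal_nonneg)
    ?_ hcomp
  filter_upwards [hev, hl1ev] with N hcN hl1
  have hrho : (0:ℝ) < mu N / alpha N := by
    have := halpha N; have := hmu N; positivity
  have hcl : c ≤ (l N : ℝ) * (mu N / alpha N) := by
    rw [← mul_div_assoc]; exact hcN
  calc ((M N).μ {ω | ∃ t : ℝ, 0 ≤ t ∧ (M N).X t ω = 2 * l N}).toReal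
      ≤ phiF (mu N / alpha N) (l N) / phiF (mu N / alpha N) (2 * l N) :=
        main_bound (M N) (halpha N) (hmu N) (l N) hl1 (hinit N)
    _ ≤ (l N : ℝ) * θ ^ (l N) :=
        ratio_bound c hc (l N) hl1 hrho hcl
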